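/- In the Banach space C(S¹) of continuous real-valued functions on S¹ with the sup norm, the closure of the convex hull of the set {h_A : A ⊆ [0,π] Lebesgue measurable} equals E(S¹). -/

import Mathlib

noncomputable section

open MeasureTheory

/-- The circle `ℝ/2πℤ` with the quotient metric (geodesic metric, circumference `2π`). -/
abbrev S1 : Type := AddCircle (2 * Real.pi)

instance : Fact (0 < 2 * Real.pi) := ⟨by positivity⟩

/-- The function `h_A : S¹ → ℝ` associated to a measurable set `A ⊆ [0,π]`:
`h_A φ = (π − μ A) + 2 μ(A ∩ [0,φ]) − φ` for `φ ∈ [0,π]` and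
`h_A φ = π − h_A (φ − π)` for `φ ∈ (π, 2π)`. -/
def hA (A : Set ℝ) : S1 → ℝ := fun φ =>
  let t : ℝ := (AddCircle.equivIco (2 * Real.pi) 0 φ : ℝ)
  if t ≤ Real.pi then
    (Real.pi - (volume A).toReal) + 2 * (volume (A ∩ Set.Icc 0 t)).toReal - t
  else
    Real.pi - ((Real.pi - (volume A).toReal)
      + 2 * (volume (A ∩ Set.Icc 0 (t - Real.pi))).toReal - (t - Real.pi))

namespace ES1aux
open Set Real

def mA (A : Set ℝ) (t : ℝ) : ℝ := (volume (A ∩ Set.Icc 0 t)).toReal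
def base (A : Set ℝ) (t : ℝ) : ℝ := (Real.pi - (volume A).toReal) + 2 * mA A t - t
def Fc (A : Set ℝ) (t : ℝ) : ℝ :=
  if t ≤ Real.pi then base A t else Real.pi - base A (t - Real.pi)

lemma hA_eq_Fc (A : Set ℝ) (φ : S1) :
    hA A φ = Fc A (AddCircle.equivIco (2 * Real.pi) 0 φ : ℝ) := rfl

lemma mA_fin (A : Set ℝ) (t : ℝ) : volume (A ∩ Set.Icc 0 t) ≠ ⊤ := by
  refine ne_top_of_le_ne_top ?_ (measure_mono Set.inter_subset_right)
  rw [Real.volume_Icc]; exact ENNReal.ofReal_ne_top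

lemma mA_nonneg (A : Set ℝ) (t : ℝ) : 0 ≤ mA A t := ENNReal.toReal_nonneg

lemma mA_mono (A : Set ℝ) {s t : ℝ} (h : s ≤ t) : mA A s ≤ mA A t := by
  refine ENNReal.toReal_mono (mA_fin A t) (measure_mono ?_)
  exact Set.inter_subset_inter_right _ (Set.Icc_subset_Icc_right h)

lemma mA_sub_le (A : Set ℝ) {s t : ℝ} (h : s ≤ t) : mA A t - mA A s ≤ t - s := by
  have hsub : A ∩ Set.Icc 0 t ⊆ (A ∩ Set.Icc 0 s) ∪ Set.Ioc s t := by
    rintro x ⟨hxA, hx0, hxt⟩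
    rcases le_or_gt x s with hxs | hxs
    · exact Or.inl ⟨hxA, hx0, hxs⟩
    · exact Or.inr ⟨hxs, hxt⟩
  have : volume (A ∩ Set.Icc 0 t) ≤ volume (A ∩ Set.Icc 0 s) + volume (Set.Ioc s t) :=
    (measure_mono hsub).trans (measure_union_le _ _)
  have h2 : mA A t ≤ mA A s + (t - s) := by
    have hioc : (volume (Set.Ioc s t)).toReal = t - s := by
      rw [Real.volume_Ioc, ENNReal.toReal_ofReal (by linarith)]
    calc mA A t ≤ (volume (A ∩ Set.Icc 0 s) + volume (Set.Ioc s t)).toReal := by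
          refine ENNReal.toReal_mono ?_ this
          exact ENNReal.add_ne_top.2 ⟨mA_fin A s, by rw [Real.volume_Ioc]; exact ENNReal.ofReal_ne_top⟩
      _ = mA A s + (t - s) := by
          rw [ENNReal.toReal_add (mA_fin A s) (by rw [Real.volume_Ioc]; exact ENNReal.ofReal_ne_top), hioc]; rfl
  linarith

lemma base_abs_le (A : Set ℝ) (s t : ℝ) : |base A t - base A s| ≤ |t - s| := by
  rcases le_total s t with h | h
  · have h1 := mA_mono A h
    have h2 := mA_sub_le A h
    rw [abs_of_nonneg (by linarith : (0:ℝ) ≤ t - s)]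
    rw [abs_le]; unfold base; constructor <;> linarith
  · have h1 := mA_mono A h
    have h2 := mA_sub_le A h
    rw [abs_of_nonpos (by linarith : t - s ≤ 0)]
    rw [abs_le]; unfold base; constructor <;> linarith

lemma mA_zero (A : Set ℝ) : mA A 0 = 0 := by
  unfold mA
  have : volume (A ∩ Set.Icc 0 0) = 0 := by
    refine measure_mono_null (Set.inter_subset_right.trans ?_) (by simp : volume ({0} : Set ℝ) = 0)
    simp
  rw [show Set.Icc (0:ℝ) 0 = {0} by simp] at this
  simp [this]

lemma base_zero (A : Set ℝ) : base A 0 = Real.pi - (volume A).toReal := by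
  unfold base; rw [mA_zero]; ring

lemma mA_pi (A : Set ℝ) (hA1 : A ⊆ Set.Icc 0 Real.pi) : mA A Real.pi = (volume A).toReal := by
  unfold mA; rw [Set.inter_eq_self_of_subset_left hA1]

lemma base_pi (A : Set ℝ) (hA1 : A ⊆ Set.Icc 0 Real.pi) : base A Real.pi = (volume A).toReal := by
  unfold base; rw [mA_pi A hA1]; ring

lemma base_zero_add_pi (A : Set ℝ) (hA1 : A ⊆ Set.Icc 0 Real.pi) :
    base A 0 + base A Real.pi = Real.pi := by
  rw [base_zero, base_pi A hA1]; ring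

lemma Fc_abs_le (A : Set ℝ) (hA1 : A ⊆ Set.Icc 0 Real.pi) (s t : ℝ) :
    |Fc A t - Fc A s| ≤ |t - s| := by
  have key : ∀ u v : ℝ, u ≤ v → |Fc A v - Fc A u| ≤ v - u := by
    intro u v huv
    unfold Fc
    by_cases hu : u ≤ Real.pi <;> by_cases hv : v ≤ Real.pi
    · rw [if_pos hu, if_pos hv]
      simpa [abs_sub_comm, abs_of_nonneg (by linarith : (0:ℝ) ≤ v - u)] using base_abs_le A u v
    · rw [if_pos hu, if_neg hv]
      push_neg at hv
      have h1 : |base A u - base A Real.pi| ≤ Real.pi - u := by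
        simpa [abs_of_nonpos (by linarith : u - Real.pi ≤ 0), abs_sub_comm] using base_abs_le A Real.pi u
      have h2 : |base A (v - Real.pi) - base A 0| ≤ v - Real.pi := by
        simpa [abs_of_nonneg (by linarith : (0:ℝ) ≤ v - Real.pi)] using base_abs_le A 0 (v - Real.pi)
      have h3 := base_zero_add_pi A hA1
      rw [abs_le] at h1 h2 ⊢; constructor <;> linarith
    · linarith
    · rw [if_neg hu, if_neg hv]
      push_neg at hu
      have := base_abs_le A (u - Real.pi) (v - Real.pi)
      rw [show v - Real.pi - (u - Real.pi) = v - u by ring,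
        abs_of_nonneg (by linarith : (0:ℝ) ≤ v - u)] at this
      rw [abs_le] at this ⊢
      constructor <;> linarith
  rcases le_total s t with h | h
  · simpa [abs_of_nonneg (by linarith : (0:ℝ) ≤ t - s)] using key s t h
  · rw [abs_sub_comm, abs_of_nonpos (by linarith : t - s ≤ 0)]
    simpa using key t s h

lemma Fc_boundary (A : Set ℝ) (hA1 : A ⊆ Set.Icc 0 Real.pi) :
    Fc A 0 = Fc A (0 + 2 * Real.pi) := by
  have hπ := Real.pi_pos
  unfold Fc
  rw [if_pos (le_of_lt hπ), if_neg (by linarith)]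
  have := base_zero_add_pi A hA1
  rw [show (0:ℝ) + 2 * Real.pi - Real.pi = Real.pi by ring]
  linarith

lemma Fc_continuous (A : Set ℝ) (hA1 : A ⊆ Set.Icc 0 Real.pi) : Continuous (Fc A) := by
  have : LipschitzWith 1 (Fc A) := by
    refine LipschitzWith.of_dist_le_mul fun x y => ?_
    rw [Real.dist_eq, Real.dist_eq, NNReal.coe_one, one_mul]
    exact Fc_abs_le A hA1 y x
  exact this.continuous

lemma hA_continuous (A : Set ℝ) (hA1 : A ⊆ Set.Icc 0 Real.pi) : Continuous (hA A) := by
  have : hA A = AddCircle.liftIco (2 * Real.pi) 0 (Fc A) := rfl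
  rw [this]
  exact AddCircle.liftIco_continuous (Fc_boundary A hA1) (Fc_continuous A hA1).continuousOn

end ES1aux
namespace ES1aux

lemma coe_equivIco (x : S1) : (((AddCircle.equivIco (2*Real.pi) 0 x) : ℝ) : S1) = x :=
  (AddCircle.equivIco _ 0).symm_apply_apply x

lemma equivIco_mem (x : S1) :
    ((AddCircle.equivIco (2*Real.pi) 0 x : ℝ)) ∈ Set.Ico (0:ℝ) (2*Real.pi) := by
  have := (AddCircle.equivIco (2*Real.pi) 0 x).2
  simpa using this

lemma exists_rep (x : S1) : ∃ a ∈ Set.Ico (0:ℝ) (2*Real.pi), ((a : ℝ) : S1) = x :=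
  ⟨_, equivIco_mem x, coe_equivIco x⟩

lemma hA_coe (A : Set ℝ) {x : ℝ} (hx : x ∈ Set.Ico (0:ℝ) (2*Real.pi)) :
    hA A ((x : ℝ) : S1) = Fc A x := by
  have : hA A = AddCircle.liftIco (2 * Real.pi) 0 (Fc A) := rfl
  rw [this]
  exact AddCircle.liftIco_zero_coe_apply hx

lemma hA_lipschitz (A : Set ℝ) (hA1 : A ⊆ Set.Icc 0 Real.pi) : LipschitzWith 1 (hA A) := by
  have hπ := Real.pi_pos
  refine LipschitzWith.of_dist_le_mul fun x y => ?_
  rw [NNReal.coe_one, one_mul]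
  obtain ⟨a, hamem, rfl⟩ := exists_rep x
  obtain ⟨b, hbmem, rfl⟩ := exists_rep y
  obtain ⟨ha0, ha2⟩ := hamem
  obtain ⟨hb0, hb2⟩ := hbmem
  rw [hA_coe A ⟨ha0, ha2⟩, hA_coe A ⟨hb0, hb2⟩, Real.dist_eq]
  have hdist : dist ((a:ℝ) : S1) ((b:ℝ) : S1)
      = |(a - b) - round ((2*Real.pi)⁻¹ * (a - b)) * (2*Real.pi)| := by
    rw [dist_eq_norm, show ((a:ℝ):S1) - ((b:ℝ):S1) = ((a - b : ℝ) : S1) from rfl]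
    exact AddCircle.norm_eq _
  rw [hdist]
  set c : ℝ := (2*Real.pi)⁻¹ * (a - b) with hc
  have hab : a - b = 2 * Real.pi * c := by rw [hc]; field_simp
  have hrd : |c - round c| ≤ 1/2 := abs_sub_round c
  have hclt : |c| < 1 := by
    rw [abs_lt]; constructor
    · rw [hc, neg_lt, ← mul_neg]
      have : -(a - b) < 2 * Real.pi := by linarith
      calc (2*Real.pi)⁻¹ * -(a-b) < (2*Real.pi)⁻¹ * (2*Real.pi) :=
            mul_lt_mul_of_pos_left this (by positivity)
        _ = 1 := by field_simp
    · have : (a - b) < 2 * Real.pi := by linarith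
      calc c < (2*Real.pi)⁻¹ * (2*Real.pi) := mul_lt_mul_of_pos_left this (by positivity)
        _ = 1 := by field_simp
  have hrcases : round c = -1 ∨ round c = 0 ∨ round c = 1 := by
    have h1 : ((-2 : ℤ) : ℝ) < (round c : ℝ) := by
      push_cast
      have := abs_lt.1 hclt
      have := abs_le.1 hrd
      linarith
    have h2 : ((round c : ℝ)) < ((2:ℤ) : ℝ) := by
      push_cast
      have := abs_lt.1 hclt
      have := abs_le.1 hrd
      linarith
    have h1' : (-2 : ℤ) < round c := by exact_mod_cast h1
    have h2' : round c < 2 := by exact_mod_cast h2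
    omega
  have hFboundary : Fc A 0 = Fc A (0 + 2*Real.pi) := Fc_boundary A hA1
  rcases hrcases with h | h | h
  · -- round c = -1, so c ≤ -1/2, b - a ≥ π
    rw [h] at hrd ⊢
    have hcle : c ≤ -1/2 := by
      have := abs_le.1 hrd; push_cast at this; linarith [this.2]
    have hba : Real.pi ≤ b - a := by nlinarith
    have h1 : |Fc A b - Fc A (0 + 2*Real.pi)| ≤ |b - (0 + 2*Real.pi)| := Fc_abs_le A hA1 _ _
    have h2 : |Fc A 0 - Fc A a| ≤ |0 - a| := Fc_abs_le A hA1 _ _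
    rw [abs_of_nonpos (by linarith : b - (0 + 2*Real.pi) ≤ 0)] at h1
    rw [abs_of_nonpos (by linarith : (0:ℝ) - a ≤ 0)] at h2
    rw [abs_of_nonneg (by push_cast; linarith : (0:ℝ) ≤ a - b - (-1:ℤ) * (2*Real.pi))]
    rw [abs_le] at h1 h2 ⊢
    push_cast
    constructor <;> [skip; skip] <;>
      (obtain ⟨h1a, h1b⟩ := h1; obtain ⟨h2a, h2b⟩ := h2; rw [hFboundary] at h2a h2b; linarith)
  · rw [h]
    push_cast
    rw [mul_comm, mul_zero, sub_zero]
    exact Fc_abs_le A hA1 b a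
  · -- round c = 1, so c ≥ 1/2, a - b ≥ π
    rw [h] at hrd ⊢
    have hcge : 1/2 ≤ c := by
      have := abs_le.1 hrd; push_cast at this; linarith [this.1]
    have hba : Real.pi ≤ a - b := by nlinarith
    have h1 : |Fc A a - Fc A (0 + 2*Real.pi)| ≤ |a - (0 + 2*Real.pi)| := Fc_abs_le A hA1 _ _
    have h2 : |Fc A 0 - Fc A b| ≤ |0 - b| := Fc_abs_le A hA1 _ _
    rw [abs_of_nonpos (by linarith : a - (0 + 2*Real.pi) ≤ 0)] at h1
    rw [abs_of_nonpos (by linarith : (0:ℝ) - b ≤ 0)] at h2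
    rw [abs_of_nonpos (by push_cast; linarith : a - b - (1:ℤ) * (2*Real.pi) ≤ 0)]
    rw [abs_le] at h1 h2 ⊢
    push_cast
    constructor <;> [skip; skip] <;>
      (obtain ⟨h1a, h1b⟩ := h1; obtain ⟨h2a, h2b⟩ := h2; rw [hFboundary] at h2a h2b; linarith)

lemma hA_antipodal (A : Set ℝ) (hA1 : A ⊆ Set.Icc 0 Real.pi) (θ : S1) :
    hA A θ + hA A (θ + ((Real.pi : ℝ) : S1)) = Real.pi := by
  have hπ := Real.pi_pos
  obtain ⟨a, ⟨ha0, ha2⟩, rfl⟩ := exists_rep θ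
  have hθπ : ((a:ℝ) : S1) + ((Real.pi : ℝ) : S1) = ((a + Real.pi : ℝ) : S1) := rfl
  have hbz := base_zero_add_pi A hA1
  rw [hA_coe A ⟨ha0, ha2⟩, hθπ]
  rcases lt_or_ge (a + Real.pi) (2 * Real.pi) with hlt | hge
  · rw [hA_coe A ⟨by linarith, hlt⟩]
    unfold Fc
    rcases eq_or_lt_of_le ha0 with h0 | h0
    · rw [if_pos (by linarith), if_pos (by linarith), ← h0, zero_add]
      linarith
    · rw [if_pos (by linarith), if_neg (by linarith),
        show a + Real.pi - Real.pi = a by ring]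
      ring
  · have hcoe : ((a + Real.pi : ℝ) : S1) = ((a - Real.pi : ℝ) : S1) := by
      rw [show a + Real.pi = (a - Real.pi) + 2 * Real.pi by ring]
      exact AddCircle.coe_add_period _ _
    rw [hcoe, hA_coe A ⟨by linarith, by linarith⟩]
    unfold Fc
    rcases eq_or_lt_of_le (by linarith : Real.pi ≤ a) with h0 | h0
    · rw [if_pos (by linarith), if_pos (by linarith), ← h0,
        show Real.pi - Real.pi = 0 by ring]
      linarith
    · rw [if_neg (by linarith), if_pos (by linarith)]
      ring

end ES1aux
namespace ES1aux

def ES : Set C(S1, ℝ) :=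
  {g : C(S1, ℝ) | LipschitzWith 1 ⇑g ∧
    ∀ θ : S1, g θ + g (θ + ((Real.pi : ℝ) : S1)) = Real.pi}

lemma isClosed_ES : IsClosed ES := by
  have h1 : IsClosed {g : C(S1, ℝ) | LipschitzWith 1 ⇑g} := by
    have : {g : C(S1, ℝ) | LipschitzWith 1 ⇑g}
        = ⋂ (x : S1) (y : S1), {g : C(S1, ℝ) | dist (g x) (g y) ≤ 1 * dist x y} := by
      ext g
      simp only [Set.mem_setOf_eq, Set.mem_iInter, lipschitzWith_iff_dist_le_mul, NNReal.coe_one]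
    rw [this]
    refine isClosed_iInter fun x => isClosed_iInter fun y => ?_
    exact isClosed_le (Continuous.dist (continuous_eval_const x)
      (continuous_eval_const y)) continuous_const
  have h2 : IsClosed {g : C(S1, ℝ) |
      ∀ θ : S1, g θ + g (θ + ((Real.pi : ℝ) : S1)) = Real.pi} := by
    have : {g : C(S1, ℝ) | ∀ θ : S1, g θ + g (θ + ((Real.pi : ℝ) : S1)) = Real.pi}
        = ⋂ (θ : S1), {g : C(S1, ℝ) | g θ + g (θ + ((Real.pi : ℝ) : S1)) = Real.pi} := by
      ext g; simp
    rw [this]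
    refine isClosed_iInter fun θ => ?_
    exact isClosed_eq ((continuous_eval_const θ).add
      (continuous_eval_const _)) continuous_const
  exact h1.inter h2

lemma convex_ES : Convex ℝ ES := by
  rintro f ⟨hf1, hf2⟩ g ⟨hg1, hg2⟩ s t hs ht hst
  constructor
  · rw [lipschitzWith_iff_dist_le_mul]
    intro x y
    simp only [ContinuousMap.coe_add, ContinuousMap.coe_smul, Pi.add_apply, Pi.smul_apply,
      smul_eq_mul, NNReal.coe_one, one_mul]
    have h1 : dist (f x) (f y) ≤ dist x y := by
      simpa using hf1.dist_le_mul x y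
    have h2 : dist (g x) (g y) ≤ dist x y := by
      simpa using hg1.dist_le_mul x y
    rw [Real.dist_eq] at *
    calc |s * f x + t * g x - (s * f y + t * g y)|
        = |s * (f x - f y) + t * (g x - g y)| := by ring_nf
      _ ≤ |s * (f x - f y)| + |t * (g x - g y)| := abs_add_le _ _
      _ = s * |f x - f y| + t * |g x - g y| := by
          rw [abs_mul, abs_mul, abs_of_nonneg hs, abs_of_nonneg ht]
      _ ≤ s * dist x y + t * dist x y := by
          gcongr
      _ = dist x y := by rw [← add_mul, hst, one_mul]
  · intro θ
    simp only [ContinuousMap.coe_add, ContinuousMap.coe_smul, ContinuousMap.add_apply,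
      ContinuousMap.smul_apply, smul_eq_mul]
    have e1 : s * (f θ + f (θ + ((Real.pi : ℝ) : S1))) = s * Real.pi := by rw [hf2 θ]
    have e2 : t * (g θ + g (θ + ((Real.pi : ℝ) : S1))) = t * Real.pi := by rw [hg2 θ]
    have e3 : (s + t) * Real.pi = Real.pi := by rw [hst, one_mul]
    linarith

end ES1aux
namespace ES1aux

lemma exists_grid (n : ℕ) (hn : 1 ≤ n) {δ : ℝ} (hδ : 0 < δ) {t : ℝ} (ht0 : 0 ≤ t)
    (htn : t ≤ n * δ) :
    ∃ j : ℕ, j < n ∧ (j:ℝ) * δ ≤ t ∧ t ≤ ((j:ℝ) + 1) * δ := by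
  set j0 : ℕ := (⌊t/δ⌋).toNat with hj0
  have hfloor_nonneg : (0:ℤ) ≤ ⌊t/δ⌋ := Int.floor_nonneg.2 (div_nonneg ht0 hδ.le)
  have hcast : ((j0:ℕ):ℝ) = ((⌊t/δ⌋:ℤ):ℝ) := by
    rw [hj0]; exact_mod_cast congrArg (Int.cast : ℤ → ℝ) (Int.toNat_of_nonneg hfloor_nonneg)
  refine ⟨min (n-1) j0, by omega, ?_, ?_⟩
  · have h1 : ((min (n-1) j0 : ℕ) : ℝ) ≤ (j0:ℝ) := by exact_mod_cast min_le_right (n-1) j0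
    have h2 : (j0:ℝ) ≤ t/δ := by rw [hcast]; exact Int.floor_le _
    calc ((min (n-1) j0 : ℕ) : ℝ) * δ ≤ (t/δ) * δ := by
          apply mul_le_mul_of_nonneg_right (h1.trans h2) hδ.le
      _ = t := div_mul_cancel₀ t hδ.ne'
  · rcases le_or_gt j0 (n-1) with h | h
    · rw [min_eq_right h]
      have h3 : t/δ < (j0:ℝ) + 1 := by rw [hcast]; exact Int.lt_floor_add_one _
      have := (div_lt_iff₀ hδ).1 h3
      linarith
    · rw [min_eq_left h.le]
      have h4 : ((n-1:ℕ):ℝ) + 1 = (n:ℝ) := by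
        have : (n:ℕ) - 1 + 1 = n := by omega
        exact_mod_cast congrArg (Nat.cast : ℕ → ℝ) this
      rw [h4]; exact htn

lemma dist_coe_le (s t : ℝ) : dist ((s:ℝ):S1) ((t:ℝ):S1) ≤ |s - t| := by
  rw [dist_eq_norm, show ((s:ℝ):S1) - ((t:ℝ):S1) = ((s - t : ℝ) : S1) from rfl]
  calc ‖((s - t : ℝ) : S1)‖ ≤ ‖s - t‖ := QuotientAddGroup.norm_mk_le_norm
    _ = |s - t| := Real.norm_eq_abs _

lemma ES_subset_closure :
    ES ⊆ closure {g : C(S1, ℝ) |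
      ∃ A : Set ℝ, A ⊆ Set.Icc 0 Real.pi ∧ MeasurableSet A ∧ ⇑g = hA A} := by
  have hπ := Real.pi_pos
  rintro f ⟨hlip, hant⟩
  rw [Metric.mem_closure_iff]
  intro ε hε
  obtain ⟨n, hn⟩ := exists_nat_gt (2 * Real.pi / ε + 1)
  have hn1 : 1 ≤ n := by
    have h0 : (0:ℝ) < 2 * Real.pi / ε := by positivity
    have : (1:ℝ) < (n:ℝ) := by linarith
    exact_mod_cast this.le
  have hnR : (0:ℝ) < n := by exact_mod_cast hn1
  set δ : ℝ := Real.pi / n with hδdef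
  have hδ : 0 < δ := by positivity
  have hnδ : (n:ℝ) * δ = Real.pi := by
    rw [hδdef]; field_simp
  set F : ℝ → ℝ := fun t => f ((t:ℝ):S1) with hF
  have hFlip : ∀ s t : ℝ, |F s - F t| ≤ |s - t| := by
    intro s t
    have h1 := hlip.dist_le_mul ((s:ℝ):S1) ((t:ℝ):S1)
    rw [NNReal.coe_one, one_mul, Real.dist_eq] at h1
    exact h1.trans (dist_coe_le s t)
  have hF0π : F 0 + F Real.pi = Real.pi := by
    have h := hant ((0:ℝ):S1)
    have e : ((0:ℝ):S1) + ((Real.pi:ℝ):S1) = ((Real.pi:ℝ):S1) := by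
      rw [show ((0:ℝ):S1) + ((Real.pi:ℝ):S1) = ((0 + Real.pi : ℝ):S1) from rfl, zero_add]
    rw [e] at h
    exact h
  set α : ℕ → ℝ := fun k => (F (((k:ℝ)+1)*δ) - F ((k:ℝ)*δ) + δ)/2 with hα
  have hα0 : ∀ k, 0 ≤ α k := by
    intro k
    have := (abs_le.1 (hFlip (((k:ℝ)+1)*δ) ((k:ℝ)*δ))).1
    rw [show ((k:ℝ)+1)*δ - (k:ℝ)*δ = δ by ring, abs_of_pos hδ] at this
    rw [hα]; dsimp only; linarith
  have hαδ : ∀ k, α k ≤ δ := by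
    intro k
    have := (abs_le.1 (hFlip (((k:ℝ)+1)*δ) ((k:ℝ)*δ))).2
    rw [show ((k:ℝ)+1)*δ - (k:ℝ)*δ = δ by ring, abs_of_pos hδ] at this
    rw [hα]; dsimp only; linarith
  set A : Set ℝ := ⋃ k ∈ Finset.range n, Set.Ico ((k:ℝ)*δ) ((k:ℝ)*δ + α k) with hAdef
  have hAmeas : MeasurableSet A :=
    (Finset.range n).measurableSet_biUnion (fun k _ => measurableSet_Ico)
  have hIcosub : ∀ k : ℕ, k < n → Set.Ico ((k:ℝ)*δ) ((k:ℝ)*δ + α k) ⊆ Set.Icc 0 Real.pi := by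
    intro k hk x ⟨hx1, hx2⟩
    have hk1 : ((k:ℝ)+1) ≤ (n:ℝ) := by exact_mod_cast Nat.succ_le_of_lt hk
    have h1 : (0:ℝ) ≤ (k:ℝ)*δ := by positivity
    have h2 : (k:ℝ)*δ + α k ≤ ((k:ℝ)+1)*δ := by have := hαδ k; linarith
    have h3 : ((k:ℝ)+1)*δ ≤ (n:ℝ)*δ := mul_le_mul_of_nonneg_right hk1 hδ.le
    constructor
    · linarith
    · rw [← hnδ]; linarith
  have hAsub : A ⊆ Set.Icc 0 Real.pi := by
    rw [hAdef]
    exact Set.iUnion₂_subset fun k hk => hIcosub k (Finset.mem_range.1 hk)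
  -- key measure computation
  have hmeas : ∀ j : ℕ, j ≤ n →
      volume (A ∩ Set.Icc 0 ((j:ℝ)*δ)) = ENNReal.ofReal (∑ k ∈ Finset.range j, α k) := by
    intro j hj
    have hsplit : A ∩ Set.Icc 0 ((j:ℝ)*δ)
        = ⋃ k ∈ Finset.range n, (Set.Ico ((k:ℝ)*δ) ((k:ℝ)*δ + α k) ∩ Set.Icc 0 ((j:ℝ)*δ)) := by
      rw [hAdef]
      simp only [Set.iUnion_inter]
    have hdisj : (↑(Finset.range n) : Set ℕ).Pairwise (Function.onFun Disjoint
        (fun k => Set.Ico ((k:ℝ)*δ) ((k:ℝ)*δ + α k) ∩ Set.Icc 0 ((j:ℝ)*δ))) := by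
      intro k _ l _ hkl
      have key : ∀ k l : ℕ, k < l →
          Disjoint (Set.Ico ((k:ℝ)*δ) ((k:ℝ)*δ + α k)) (Set.Ico ((l:ℝ)*δ) ((l:ℝ)*δ + α l)) := by
        intro k l hkl'
        rw [Set.Ico_disjoint_Ico]
        have hk1 : ((k:ℝ)+1) ≤ (l:ℝ) := by exact_mod_cast Nat.succ_le_of_lt hkl'
        have h2 : (k:ℝ)*δ + α k ≤ ((k:ℝ)+1)*δ := by have := hαδ k; linarith
        have h3 : ((k:ℝ)+1)*δ ≤ (l:ℝ)*δ := mul_le_mul_of_nonneg_right hk1 hδ.le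
        calc min ((k:ℝ)*δ + α k) ((l:ℝ)*δ + α l) ≤ (k:ℝ)*δ + α k := min_le_left _ _
          _ ≤ (l:ℝ)*δ := by linarith
          _ ≤ max ((k:ℝ)*δ) ((l:ℝ)*δ) := le_max_right _ _
      rcases hkl.lt_or_gt with h | h
      · exact Disjoint.mono Set.inter_subset_left Set.inter_subset_left (key k l h)
      · exact (Disjoint.mono Set.inter_subset_left Set.inter_subset_left (key l k h)).symm
    rw [hsplit, measure_biUnion_finset hdisj
      (fun k _ => measurableSet_Ico.inter measurableSet_Icc)]
    have hterm : ∀ k ∈ Finset.range j,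
        volume (Set.Ico ((k:ℝ)*δ) ((k:ℝ)*δ + α k) ∩ Set.Icc 0 ((j:ℝ)*δ))
          = ENNReal.ofReal (α k) := by
      intro k hk
      have hkj : k < j := Finset.mem_range.1 hk
      have hkj' : ((k:ℝ)+1) ≤ (j:ℝ) := by exact_mod_cast Nat.succ_le_of_lt hkj
      have hsub : Set.Ico ((k:ℝ)*δ) ((k:ℝ)*δ + α k) ⊆ Set.Icc 0 ((j:ℝ)*δ) := by
        intro x ⟨hx1, hx2⟩
        have h1 : (0:ℝ) ≤ (k:ℝ)*δ := by positivity
        have h2 : (k:ℝ)*δ + α k ≤ ((k:ℝ)+1)*δ := by have := hαδ k; linarith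
        have h3 : ((k:ℝ)+1)*δ ≤ (j:ℝ)*δ := mul_le_mul_of_nonneg_right hkj' hδ.le
        exact ⟨by linarith, by linarith⟩
      rw [Set.inter_eq_self_of_subset_left hsub, Real.volume_Ico]
      congr 1; ring
    have hzero : ∀ k ∈ Finset.range n, k ∉ Finset.range j →
        volume (Set.Ico ((k:ℝ)*δ) ((k:ℝ)*δ + α k) ∩ Set.Icc 0 ((j:ℝ)*δ)) = 0 := by
      intro k _ hk
      have hjk : j ≤ k := by simpa using Finset.mem_range.not.1 hk |> Nat.le_of_not_lt
      have hjk' : (j:ℝ) ≤ (k:ℝ) := by exact_mod_cast hjk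
      refine measure_mono_null ?_ (Real.volume_singleton (a := (j:ℝ)*δ))
      rintro x ⟨⟨hx1, _⟩, _, hx3⟩
      have : (j:ℝ)*δ ≤ (k:ℝ)*δ := mul_le_mul_of_nonneg_right hjk' hδ.le
      simp only [Set.mem_singleton_iff]
      linarith
    rw [← Finset.sum_subset (Finset.range_subset_range.2 hj) hzero,
      Finset.sum_congr rfl hterm, ← ENNReal.ofReal_sum_of_nonneg (fun k _ => hα0 k)]
  have hvolA : volume A = ENNReal.ofReal (∑ k ∈ Finset.range n, α k) := by
    rw [← hmeas n le_rfl, hnδ, Set.inter_eq_self_of_subset_left hAsub]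
  -- grid equality
  have htel : ∀ j : ℕ, ∑ k ∈ Finset.range j, (F (((k:ℝ)+1)*δ) - F ((k:ℝ)*δ))
      = F ((j:ℝ)*δ) - F 0 := by
    intro j
    have h := Finset.sum_range_sub (fun k : ℕ => F ((k:ℝ)*δ)) j
    simp only [Nat.cast_zero, zero_mul] at h
    rw [← h]
    apply Finset.sum_congr rfl
    intro k _
    congr 2
    push_cast
    ring
  have hsum : ∀ j : ℕ, ∑ k ∈ Finset.range j, α k = (F ((j:ℝ)*δ) - F 0 + (j:ℝ)*δ)/2 := by
    intro j
    rw [hα]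
    rw [← Finset.sum_div, Finset.sum_add_distrib, htel j, Finset.sum_const,
      Finset.card_range, nsmul_eq_mul]
  have hgrid : ∀ j : ℕ, j ≤ n → base A ((j:ℝ)*δ) = F ((j:ℝ)*δ) := by
    intro j hj
    have hSn : ∑ k ∈ Finset.range n, α k = Real.pi - F 0 := by
      rw [hsum n, hnδ]
      have : F Real.pi = Real.pi - F 0 := by linarith
      rw [this]; ring
    have hSj_nonneg : 0 ≤ ∑ k ∈ Finset.range j, α k := Finset.sum_nonneg fun k _ => hα0 k
    have hSn_nonneg : 0 ≤ ∑ k ∈ Finset.range n, α k := Finset.sum_nonneg fun k _ => hα0 k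
    unfold base mA
    rw [hvolA, hmeas j hj, ENNReal.toReal_ofReal hSn_nonneg, ENNReal.toReal_ofReal hSj_nonneg,
      hSn, hsum j]
    ring
  -- pointwise bound on [0, π]
  have hpt : ∀ t : ℝ, t ∈ Set.Icc 0 Real.pi → |F t - base A t| ≤ 2*δ := by
    rintro t ⟨ht0, htπ⟩
    obtain ⟨j, hjn, hj1, hj2⟩ := exists_grid n hn1 hδ ht0 (by rw [hnδ]; exact htπ)
    have hgap : t - (j:ℝ)*δ ≤ δ := by linarith
    have h1 := hFlip t ((j:ℝ)*δ)
    have h2 := base_abs_le A ((j:ℝ)*δ) t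
    have h3 := hgrid j hjn.le
    rw [abs_of_nonneg (by linarith : (0:ℝ) ≤ t - (j:ℝ)*δ)] at h1
    rw [abs_of_nonneg (by linarith : (0:ℝ) ≤ t - (j:ℝ)*δ)] at h2
    rw [abs_le] at h1 h2 ⊢
    constructor <;> (obtain ⟨h1a, h1b⟩ := h1; obtain ⟨h2a, h2b⟩ := h2; linarith)
  -- bound on the whole circle
  have hcircle : ∀ x : S1, |f x - hA A x| ≤ 2*δ := by
    intro x
    obtain ⟨a, ⟨ha0, ha2⟩, rfl⟩ := exists_rep x
    rw [hA_coe A ⟨ha0, ha2⟩]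
    unfold Fc
    by_cases hap : a ≤ Real.pi
    · rw [if_pos hap]
      exact hpt a ⟨ha0, hap⟩
    · rw [if_neg hap]
      push_neg at hap
      have hmem : a - Real.pi ∈ Set.Icc 0 Real.pi := ⟨by linarith, by linarith⟩
      have hco : ((a - Real.pi : ℝ):S1) + ((Real.pi:ℝ):S1) = ((a:ℝ):S1) := by
        rw [show ((a - Real.pi : ℝ):S1) + ((Real.pi:ℝ):S1)
          = ((a - Real.pi + Real.pi : ℝ):S1) from rfl]
        norm_num
      have h := hant ((a - Real.pi : ℝ):S1)
      rw [hco] at h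
      have hfa : f ((a:ℝ):S1) = Real.pi - F (a - Real.pi) := by
        rw [hF]; dsimp only; linarith
      rw [hfa, show Real.pi - F (a - Real.pi) - (Real.pi - base A (a - Real.pi))
        = -(F (a - Real.pi) - base A (a - Real.pi)) by ring, abs_neg]
      exact hpt (a - Real.pi) hmem
  -- assemble
  refine ⟨⟨hA A, hA_continuous A hAsub⟩, ⟨A, hAsub, hAmeas, rfl⟩, ?_⟩
  have hd : dist f ⟨hA A, hA_continuous A hAsub⟩ ≤ 2*δ := by
    rw [ContinuousMap.dist_le (by positivity)]
    intro x
    rw [Real.dist_eq]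
    exact hcircle x
  have hfin : 2*δ < ε := by
    rw [hδdef]
    have h1 : 2 * Real.pi / ε < (n:ℝ) := by linarith
    rw [div_lt_iff₀ hε] at h1
    rw [show 2*(Real.pi/(n:ℝ)) = 2*Real.pi/(n:ℝ) by ring, div_lt_iff₀ hnR]
    linarith
  linarith

end ES1aux

/-- In `C(S¹, ℝ)` with the sup norm, the closure of the convex hull of
`{h_A : A ⊆ [0,π] Lebesgue measurable}` equals the tight span `E(S¹)`
(the set of 1-Lipschitz functions `f` with `f θ + f (θ + π) = π`). -/
theorem closure_convexHull_hA_eq_ES1 :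
    closure (convexHull ℝ
      {g : C(S1, ℝ) | ∃ A : Set ℝ, A ⊆ Set.Icc 0 Real.pi ∧ MeasurableSet A ∧ ⇑g = hA A}) =
    {g : C(S1, ℝ) | LipschitzWith 1 ⇑g ∧
      ∀ θ : S1, g θ + g (θ + ((Real.pi : ℝ) : S1)) = Real.pi} := by
  have hES : {g : C(S1, ℝ) | LipschitzWith 1 ⇑g ∧
      ∀ θ : S1, g θ + g (θ + ((Real.pi : ℝ) : S1)) = Real.pi} = ES1aux.ES := rfl
  rw [hES]
  apply Set.Subset.antisymm
  · have hSE : {g : C(S1, ℝ) | ∃ A : Set ℝ,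
        A ⊆ Set.Icc 0 Real.pi ∧ MeasurableSet A ∧ ⇑g = hA A} ⊆ ES1aux.ES := by
      rintro g ⟨A, h1, _, h3⟩
      constructor
      · rw [h3]; exact ES1aux.hA_lipschitz A h1
      · intro θ
        show (⇑g) θ + (⇑g) _ = _
        rw [h3]
        exact ES1aux.hA_antipodal A h1 θ
    exact closure_minimal (convexHull_min hSE ES1aux.convex_ES) ES1aux.isClosed_ES
  · intro g hg
    exact closure_mono (subset_convexHull ℝ _) (ES1aux.ES_subset_closure hg)

end
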